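/- Suppose points u⁰, …, u^k ∈ Q and λ̂ ∈ Q satisfy the estimate-sequence inequality ((k+1)(k+2)/4)·f_c(λ̂) ≥ max_{λ ∈ Q} { −(L/σ_Q)·d_Q(λ) + Σ_{l=0}^{k} ((l+1)/2)·[f_c(u^l) + ⟨A x^{l+1} + B z^{l+1} − b, λ − u^l⟩] }, where x^{l+1} ∈ X and z^{l+1} ∈ Z are the minimizers defining f_c(u^l), i.e. f_c(u^l) = φ₁(x^{l+1}) + φ₂(z^{l+1}) + ⟨u^l, A x^{l+1} + B z^{l+1} − b⟩ + c(d_X(x^{l+1}) + d_Z(z^{l+1})). Set x̂ = Σ_{l=0}^{k} (2(l+1)/((k+1)(k+2)))·x^{l+1} and ẑ = Σ_{l=0}^{k} (2(l+1)/((k+1)(k+2)))·z^{l+1}. Then the duality gap satisfies [φ₁(x̂) + φ₂(ẑ)] − f_0(λ̂) ≤ c(D_X + D_Z) − max_{λ ∈ Q} [ −(4L/(σ_Q(k+1)²))·d_Q(λ) + ⟨A x̂ + B ẑ − b, λ⟩ ]. -/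

import Mathlib

open scoped RealInnerProductSpace


private lemma sum_range_succ_cast (k : ℕ) :
    ∑ l ∈ Finset.range (k + 1), ((l:ℝ) + 1) = ((k:ℝ) + 1) * ((k:ℝ) + 2) / 2 := by
  induction k with
  | zero => norm_num
  | succ n ih =>
      rw [Finset.sum_range_succ, ih]
      push_cast
      ring

set_option maxHeartbeats 1000000 in
/-- the duality-gap bound of Theorem 3. -/
theorem duality_gap_bound {n m p : ℕ}
    (X : Set (EuclideanSpace ℝ (Fin m))) (Z : Set (EuclideanSpace ℝ (Fin p)))
    (hXne : X.Nonempty) (hXcomp : IsCompact X) (hXconv : Convex ℝ X)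
    (hZne : Z.Nonempty) (hZcomp : IsCompact Z) (hZconv : Convex ℝ Z)
    (φ₁ : EuclideanSpace ℝ (Fin m) → ℝ) (φ₂ : EuclideanSpace ℝ (Fin p) → ℝ)
    (hφ₁cont : Continuous φ₁) (hφ₁conv : ConvexOn ℝ Set.univ φ₁)
    (hφ₂cont : Continuous φ₂) (hφ₂conv : ConvexOn ℝ Set.univ φ₂)
    (A : EuclideanSpace ℝ (Fin m) →L[ℝ] EuclideanSpace ℝ (Fin n))
    (B : EuclideanSpace ℝ (Fin p) →L[ℝ] EuclideanSpace ℝ (Fin n))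
    (b : EuclideanSpace ℝ (Fin n))
    (dX : EuclideanSpace ℝ (Fin m) → ℝ) (dZ : EuclideanSpace ℝ (Fin p) → ℝ)
    (hdXcont : Continuous dX) (hdXnn : ∀ x, 0 ≤ dX x)
    (hdZcont : Continuous dZ) (hdZnn : ∀ z, 0 ≤ dZ z)
    (c : ℝ) (hc : 0 < c)
    (DX DZ : ℝ) (hDX : ∀ x ∈ X, dX x ≤ DX) (hDZ : ∀ z ∈ Z, dZ z ≤ DZ)
    (f0 : EuclideanSpace ℝ (Fin n) → ℝ)
    (hf0 : ∀ lam : EuclideanSpace ℝ (Fin n),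
      IsLeast ((fun q : EuclideanSpace ℝ (Fin m) × EuclideanSpace ℝ (Fin p) =>
        φ₁ q.1 + φ₂ q.2 + ⟪lam, A q.1 + B q.2 - b⟫) '' (X ×ˢ Z)) (f0 lam))
    (fc : EuclideanSpace ℝ (Fin n) → ℝ)
    (hfc : ∀ lam : EuclideanSpace ℝ (Fin n),
      IsLeast ((fun q : EuclideanSpace ℝ (Fin m) × EuclideanSpace ℝ (Fin p) =>
        φ₁ q.1 + φ₂ q.2 + ⟪lam, A q.1 + B q.2 - b⟫ + c * (dX q.1 + dZ q.2)) '' (X ×ˢ Z))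
        (fc lam))
    (Q : Set (EuclideanSpace ℝ (Fin n))) (hQclosed : IsClosed Q) (hQconv : Convex ℝ Q)
    (dQ : EuclideanSpace ℝ (Fin n) → ℝ) (hdQcont : Continuous dQ) (hdQnn : ∀ lam, 0 ≤ dQ lam)
    (σQ L : ℝ) (hσQ : 0 < σQ) (hL : 0 < L) (k : ℕ)
    (u : ℕ → EuclideanSpace ℝ (Fin n)) (hu : ∀ l ≤ k, u l ∈ Q)
    (lamhat : EuclideanSpace ℝ (Fin n)) (hlamhatQ : lamhat ∈ Q)
    (x : ℕ → EuclideanSpace ℝ (Fin m)) (z : ℕ → EuclideanSpace ℝ (Fin p))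
    (hxz : ∀ l ≤ k, x (l + 1) ∈ X ∧ z (l + 1) ∈ Z ∧
      fc (u l) = φ₁ (x (l + 1)) + φ₂ (z (l + 1)) +
        ⟪u l, A (x (l + 1)) + B (z (l + 1)) - b⟫ +
        c * (dX (x (l + 1)) + dZ (z (l + 1))))
    (hest : ∀ lam ∈ Q,
      -(L / σQ) * dQ lam + ∑ l ∈ Finset.range (k + 1), (((l : ℝ) + 1) / 2) *
          (fc (u l) + ⟪A (x (l + 1)) + B (z (l + 1)) - b, lam - u l⟫) ≤
        (((k : ℝ) + 1) * ((k : ℝ) + 2) / 4) * fc lamhat)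
    (xhat : EuclideanSpace ℝ (Fin m)) (zhat : EuclideanSpace ℝ (Fin p))
    (hxhat : xhat = ∑ l ∈ Finset.range (k + 1),
      (2 * ((l : ℝ) + 1) / (((k : ℝ) + 1) * ((k : ℝ) + 2))) • x (l + 1))
    (hzhat : zhat = ∑ l ∈ Finset.range (k + 1),
      (2 * ((l : ℝ) + 1) / (((k : ℝ) + 1) * ((k : ℝ) + 2))) • z (l + 1)) :
    ∀ lam ∈ Q,
      (φ₁ xhat + φ₂ zhat) - f0 lamhat ≤ c * (DX + DZ) -
        (-(4 * L / (σQ * ((k : ℝ) + 1) ^ 2)) * dQ lam + ⟪A xhat + B zhat - b, lam⟫) := by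
  intro lam hlam
  have hK : (0:ℝ) < (k:ℝ) + 1 := by positivity
  have hK2 : (0:ℝ) < (k:ℝ) + 2 := by positivity
  set S : ℝ := ((k:ℝ) + 1) * ((k:ℝ) + 2) / 4 with hSdef
  have hS : 0 < S := by positivity
  set α : ℕ → ℝ := fun l => 2 * ((l:ℝ) + 1) / (((k:ℝ) + 1) * ((k:ℝ) + 2)) with hαdef
  have hαnn : ∀ l ∈ Finset.range (k + 1), 0 ≤ α l := by
    intro l _
    have : (0:ℝ) ≤ (l:ℝ) + 1 := by positivity
    simp only [hαdef]
    positivity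
  have hsum1 : ∑ l ∈ Finset.range (k + 1), ((l:ℝ) + 1) = ((k:ℝ) + 1) * ((k:ℝ) + 2) / 2 :=
    sum_range_succ_cast k
  have hαsum : ∑ l ∈ Finset.range (k + 1), α l = 1 := by
    simp only [hαdef]
    rw [← Finset.sum_div, ← Finset.mul_sum, hsum1]
    field_simp
  have hwα : ∀ l : ℕ, ((l:ℝ) + 1) / 2 = S * α l := by
    intro l
    simp only [hSdef, hαdef]
    field_simp
    ring
  -- the aggregated point
  have hG : ∑ l ∈ Finset.range (k + 1), α l • (A (x (l + 1)) + B (z (l + 1)) - b)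
      = A xhat + B zhat - b := by
    rw [hxhat, hzhat, map_sum, map_sum]
    simp only [smul_add, smul_sub, Finset.sum_add_distrib, Finset.sum_sub_distrib,
      map_smul, ← Finset.sum_smul, hαsum, one_smul]
    rfl
  -- pointwise identity for each term in the estimate sequence
  have hterm : ∀ l ∈ Finset.range (k + 1),
      fc (u l) + ⟪A (x (l + 1)) + B (z (l + 1)) - b, lam - u l⟫
        = φ₁ (x (l + 1)) + φ₂ (z (l + 1)) + ⟪A (x (l + 1)) + B (z (l + 1)) - b, lam⟫
          + c * (dX (x (l + 1)) + dZ (z (l + 1))) := by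
    intro l hl
    rw [Finset.mem_range, Nat.lt_succ_iff] at hl
    have h := (hxz l hl).2.2
    have hinner : ∀ g v w : EuclideanSpace ℝ (Fin n),
        ⟪v, g⟫ + ⟪g, w - v⟫ = ⟪g, w⟫ := by
      intro g v w
      rw [real_inner_comm g v, inner_sub_right]
      ring
    rw [h]
    linear_combination hinner (A (x (l + 1)) + B (z (l + 1)) - b) (u l) lam
  -- lower bound for each term (drop the nonnegative proxy terms)
  have hterm_ge : ∀ l ∈ Finset.range (k + 1),
      S * α l * (φ₁ (x (l + 1)) + φ₂ (z (l + 1)) + ⟪A (x (l + 1)) + B (z (l + 1)) - b, lam⟫)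
        ≤ (((l:ℝ) + 1) / 2) *
          (fc (u l) + ⟪A (x (l + 1)) + B (z (l + 1)) - b, lam - u l⟫) := by
    intro l hl
    rw [hterm l hl, ← hwα l]
    have hw : (0:ℝ) ≤ ((l:ℝ) + 1) / 2 := by positivity
    have hcd : 0 ≤ c * (dX (x (l + 1)) + dZ (z (l + 1))) := by
      have := hdXnn (x (l + 1)); have := hdZnn (z (l + 1)); positivity
    nlinarith [mul_le_mul_of_nonneg_left hcd hw]
  -- Jensen for φ₁ and φ₂
  have hJ1 : φ₁ xhat ≤ ∑ l ∈ Finset.range (k + 1), α l * φ₁ (x (l + 1)) := by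
    have := hφ₁conv.map_sum_le hαnn hαsum (fun i _ => Set.mem_univ (x (i + 1)))
    simpa [hxhat, smul_eq_mul] using this
  have hJ2 : φ₂ zhat ≤ ∑ l ∈ Finset.range (k + 1), α l * φ₂ (z (l + 1)) := by
    have := hφ₂conv.map_sum_le hαnn hαsum (fun i _ => Set.mem_univ (z (i + 1)))
    simpa [hzhat, smul_eq_mul] using this
  -- linearity of the inner product
  have hJ3 : ∑ l ∈ Finset.range (k + 1), α l * ⟪A (x (l + 1)) + B (z (l + 1)) - b, lam⟫
      = ⟪A xhat + B zhat - b, lam⟫ := by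
    rw [← hG, sum_inner]
    simp only [real_inner_smul_left]
  -- assemble the lower bound on the estimate-sequence sum
  have hsumlb : S * (φ₁ xhat + φ₂ zhat + ⟪A xhat + B zhat - b, lam⟫)
      ≤ ∑ l ∈ Finset.range (k + 1), (((l:ℝ) + 1) / 2) *
          (fc (u l) + ⟪A (x (l + 1)) + B (z (l + 1)) - b, lam - u l⟫) := by
    have h1 : S * (φ₁ xhat + φ₂ zhat + ⟪A xhat + B zhat - b, lam⟫)
        ≤ S * ∑ l ∈ Finset.range (k + 1),
            α l * (φ₁ (x (l + 1)) + φ₂ (z (l + 1)) +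
              ⟪A (x (l + 1)) + B (z (l + 1)) - b, lam⟫) := by
      apply mul_le_mul_of_nonneg_left _ hS.le
      have : ∑ l ∈ Finset.range (k + 1),
          α l * (φ₁ (x (l + 1)) + φ₂ (z (l + 1)) +
            ⟪A (x (l + 1)) + B (z (l + 1)) - b, lam⟫)
          = (∑ l ∈ Finset.range (k + 1), α l * φ₁ (x (l + 1)))
            + (∑ l ∈ Finset.range (k + 1), α l * φ₂ (z (l + 1)))
            + ∑ l ∈ Finset.range (k + 1),
                α l * ⟪A (x (l + 1)) + B (z (l + 1)) - b, lam⟫ := by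
        rw [← Finset.sum_add_distrib, ← Finset.sum_add_distrib]
        exact Finset.sum_congr rfl fun l _ => by ring
      rw [this, hJ3]
      linarith [hJ1, hJ2]
    calc S * (φ₁ xhat + φ₂ zhat + ⟪A xhat + B zhat - b, lam⟫)
        ≤ S * ∑ l ∈ Finset.range (k + 1),
            α l * (φ₁ (x (l + 1)) + φ₂ (z (l + 1)) +
              ⟪A (x (l + 1)) + B (z (l + 1)) - b, lam⟫) := h1
      _ = ∑ l ∈ Finset.range (k + 1),
            S * α l * (φ₁ (x (l + 1)) + φ₂ (z (l + 1)) +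
              ⟪A (x (l + 1)) + B (z (l + 1)) - b, lam⟫) := by
          rw [Finset.mul_sum]; exact Finset.sum_congr rfl fun l _ => by ring
      _ ≤ _ := Finset.sum_le_sum hterm_ge
  -- fc at lamhat is close to f0 at lamhat
  have hfc_le : fc lamhat ≤ f0 lamhat + c * (DX + DZ) := by
    obtain ⟨⟨q, hqmem, hqval⟩, _⟩ := hf0 lamhat
    have hq1 : q.1 ∈ X := (Set.mem_prod.mp hqmem).1
    have hq2 : q.2 ∈ Z := (Set.mem_prod.mp hqmem).2
    have h2 := (hfc lamhat).2 ⟨q, hqmem, rfl⟩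
    have hd : c * (dX q.1 + dZ q.2) ≤ c * (DX + DZ) := by
      apply mul_le_mul_of_nonneg_left _ hc.le
      exact add_le_add (hDX q.1 hq1) (hDZ q.2 hq2)
    have hqval' : φ₁ q.1 + φ₂ q.2 + ⟪lamhat, A q.1 + B q.2 - b⟫ = f0 lamhat := hqval
    simp only at h2
    linarith [h2, hd, hqval']
  -- main estimate
  have hmain := hest lam hlam
  have hkey : -(L / σQ) * dQ lam
      + S * (φ₁ xhat + φ₂ zhat + ⟪A xhat + B zhat - b, lam⟫) ≤ S * fc lamhat := by
    calc -(L / σQ) * dQ lam + S * (φ₁ xhat + φ₂ zhat + ⟪A xhat + B zhat - b, lam⟫)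
        ≤ -(L / σQ) * dQ lam + ∑ l ∈ Finset.range (k + 1), (((l:ℝ) + 1) / 2) *
            (fc (u l) + ⟪A (x (l + 1)) + B (z (l + 1)) - b, lam - u l⟫) := by
          linarith [hsumlb]
      _ ≤ (((k:ℝ) + 1) * ((k:ℝ) + 2) / 4) * fc lamhat := hmain
      _ = S * fc lamhat := by rw [hSdef]
  -- compare dQ coefficients
  have hdQcoef : S * ((4 * L / (σQ * ((k:ℝ) + 1) ^ 2)) * dQ lam) ≥ (L / σQ) * dQ lam := by
    have hdq := hdQnn lam
    have heq : S * (4 * L / (σQ * ((k:ℝ) + 1) ^ 2)) = L * ((k:ℝ) + 2) / (σQ * ((k:ℝ) + 1)) := by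
      rw [hSdef]
      field_simp
    have hcoef : S * (4 * L / (σQ * ((k:ℝ) + 1) ^ 2)) ≥ L / σQ := by
      rw [heq, ge_iff_le, div_le_div_iff₀ hσQ (by positivity)]
      nlinarith [hK, hσQ, hL]
    calc S * ((4 * L / (σQ * ((k:ℝ) + 1) ^ 2)) * dQ lam)
        = (S * (4 * L / (σQ * ((k:ℝ) + 1) ^ 2))) * dQ lam := by ring
      _ ≥ (L / σQ) * dQ lam := mul_le_mul_of_nonneg_right hcoef hdq
  -- conclude
  have hfinal : S * (φ₁ xhat + φ₂ zhat + ⟪A xhat + B zhat - b, lam⟫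
      - (4 * L / (σQ * ((k:ℝ) + 1) ^ 2)) * dQ lam)
      ≤ S * (f0 lamhat + c * (DX + DZ)) := by
    have h1 : S * fc lamhat ≤ S * (f0 lamhat + c * (DX + DZ)) :=
      mul_le_mul_of_nonneg_left hfc_le hS.le
    have hexp : S * (φ₁ xhat + φ₂ zhat + ⟪A xhat + B zhat - b, lam⟫
        - (4 * L / (σQ * ((k:ℝ) + 1) ^ 2)) * dQ lam)
        = S * (φ₁ xhat + φ₂ zhat + ⟪A xhat + B zhat - b, lam⟫)
          - S * ((4 * L / (σQ * ((k:ℝ) + 1) ^ 2)) * dQ lam) := mul_sub _ _ _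
    linarith [hkey, hdQcoef, h1, hexp]
  have := (mul_le_mul_iff_right₀ hS).mp hfinal
  linarith [this]
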